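/- Every factor of w of length at most 2029 is a factor of the finite word f⁷(u₀), where u₀ = 23141121142 and f⁷ denotes the 7-fold iterate of f (so that |f⁷(u₀)| = 11·3⁷ = 24057). -/

import Mathlib

/-- The four-letter alphabet `A₄ = {1,2,3,4}`; the value `k : Fin 4` represents letter `k+1`. -/
abbrev A4 := Fin 4

/-- The morphism `f` on letters: `f(1)=121, f(2)=123, f(3)=141, f(4)=142`
(letters `1,2,3,4` encoded as `0,1,2,3`). -/
def fm : A4 → List A4
  | 0 => [0, 1, 0]
  | 1 => [0, 1, 2]
  | 2 => [0, 3, 0]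
  | 3 => [0, 3, 1]

/-- The morphism `f` extended to words by concatenation. -/
def fw (u : List A4) : List A4 := u.flatMap fm

/-- The fixed point `w` of `f` starting with the letter `1`: since `|f^k(1)| = 3^k` and each
`f^k(1)` is a prefix of `f^(k+1)(1)`, the `n`-th letter of `w` is the `n`-th letter of
`f^(n+1)(1)`. -/
def w (n : ℕ) : A4 := ((fw^[n + 1]) [0]).getD n 0

/-- The finite word `t` occurs at position `i` in the infinite word `x`. -/
def OccursAt {α : Type*} (t : List α) (x : ℕ → α) (i : ℕ) : Prop :=
  t = (List.range t.length).map fun k => x (i + k)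

/-- The finite word `v` is a factor of the infinite word `x`. -/
def FactorOf {α : Type*} (v : List α) (x : ℕ → α) : Prop :=
  ∃ i, OccursAt v x i

/-- The finite word `v` has period `q ≥ 1`: `v(j) = v(j+q)` whenever `0 ≤ j < |v| - q`. -/
def HasPeriod {α : Type*} (v : List α) (q : ℕ) : Prop :=
  1 ≤ q ∧ ∀ j, j + q < v.length → v[j]? = v[j + q]?

/-- A word lies in `ker ψ` if each letter of `A₄` occurs in it a number of times
divisible by `4`. -/
def InKerPsi (u : List A4) : Prop := ∀ a : A4, 4 ∣ u.count a

/-- `q` is a kernel period of `v`: `1 ≤ q ≤ |v|`, `v` has period `q`, and the prefix of `v`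
of length `q` lies in `ker ψ`. -/
def KernelPeriod (v : List A4) (q : ℕ) : Prop :=
  q ≤ v.length ∧ HasPeriod v q ∧ InKerPsi (v.take q)

namespace Stmt16Aux

lemma fw_append (u v : List A4) : fw (u ++ v) = fw u ++ fw v := List.flatMap_append ..

lemma fm_length (a : A4) : (fm a).length = 3 := by fin_cases a <;> rfl

lemma fw_length (u : List A4) : (fw u).length = 3 * u.length := by
  induction u with
  | nil => rfl
  | cons a u ih =>
    show (fm a ++ fw u).length = _
    simp [fm_length, ih, List.length_cons]; omega

lemma fw_iter_length (k : ℕ) (u : List A4) : (fw^[k] u).length = 3 ^ k * u.length := by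
  induction k generalizing u with
  | zero => simp
  | succ k ih =>
    rw [Function.iterate_succ_apply, ih, fw_length, pow_succ]; ring_nf

lemma fw_drop (u : List A4) (n : ℕ) : (fw u).drop (3 * n) = fw (u.drop n) := by
  induction n generalizing u with
  | zero => simp
  | succ n ih =>
    cases u with
    | nil => simp [fw]
    | cons a u =>
      show (fm a ++ fw u).drop (3 * (n + 1)) = fw (u.drop n)
      rw [show 3 * (n + 1) = (fm a).length + 3 * n by rw [fm_length]; ring,
        List.drop_length_add_append, ih]

lemma fw_take (u : List A4) (n : ℕ) : (fw u).take (3 * n) = fw (u.take n) := by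
  induction n generalizing u with
  | zero => simp [fw]
  | succ n ih =>
    cases u with
    | nil => simp [fw]
    | cons a u =>
      show (fm a ++ fw u).take (3 * (n + 1)) = fw (a :: u.take n)
      rw [show 3 * (n + 1) = (fm a).length + 3 * n by rw [fm_length]; ring,
        List.take_length_add_append, ih]
      rfl

lemma fw_iter_window (k : ℕ) (u : List A4) (q n : ℕ) :
    fw^[k] ((u.drop q).take n) = ((fw^[k] u).drop (3 ^ k * q)).take (3 ^ k * n) := by
  induction k generalizing u q n with
  | zero => simp
  | succ k ih =>
    rw [Function.iterate_succ_apply, Function.iterate_succ_apply,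
      show fw ((u.drop q).take n) = (((fw u).drop (3 * q)).take (3 * n)) by
        rw [fw_drop, fw_take],
      ih, pow_succ]
    congr 1 <;> ring_nf

lemma fw_prefix {u v : List A4} (h : u <+: v) : fw u <+: fw v := by
  obtain ⟨t, rfl⟩ := h
  exact ⟨fw t, (fw_append u t).symm⟩

lemma fw_infix {u v : List A4} (h : u <:+: v) : fw u <:+: fw v := by
  obtain ⟨s, t, rfl⟩ := h
  exact ⟨fw s, fw t, by rw [← fw_append, ← fw_append]⟩

lemma fw_iter_infix (k : ℕ) {u v : List A4} (h : u <:+: v) : fw^[k] u <:+: fw^[k] v := by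
  induction k generalizing u v with
  | zero => simpa
  | succ k ih => rw [Function.iterate_succ_apply]; exact ih (fw_infix h)

/-- The prefix tower. -/
def P (m : ℕ) : List A4 := fw^[m] [0]

lemma P_length (m : ℕ) : (P m).length = 3 ^ m := by
  simp [P, fw_iter_length]

lemma P_succ (m : ℕ) : P (m + 1) = fw (P m) := Function.iterate_succ_apply' ..

lemma P_prefix_succ (m : ℕ) : P m <+: P (m + 1) := by
  induction m with
  | zero => exact ⟨[1, 0], rfl⟩
  | succ m ih => rw [P_succ, P_succ]; exact fw_prefix ih

lemma P_prefix {m m' : ℕ} (h : m ≤ m') : P m <+: P m' := by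
  induction m' with
  | zero => rw [Nat.le_zero.mp h]
  | succ m' ih =>
    rcases Nat.lt_or_ge m (m' + 1) with h' | h'
    · exact (ih (by omega)).trans (P_prefix_succ m')
    · rw [show m = m' + 1 by omega]

lemma prefix_getElem {u v : List A4} (h : u <+: v) {n : ℕ} (hn : n < u.length) :
    u[n] = v[n]'(lt_of_lt_of_le hn h.length_le) := by
  obtain ⟨t, rfl⟩ := h
  exact (List.getElem_append_left hn).symm

lemma P_getElem {m n : ℕ} (h : n < (P m).length) : (P m)[n] = w n := by
  have hn : n < (P (n + 1)).length := by
    rw [P_length]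
    calc n < 3 ^ n := Nat.lt_pow_self (n := n) (by norm_num)
      _ ≤ 3 ^ (n + 1) := Nat.pow_le_pow_right (by norm_num) (by omega)
  have hw : w n = (P (n + 1)).getD n 0 := rfl
  rw [hw, List.getD_eq_getElem _ 0 hn]
  rcases le_total m (n + 1) with hm | hm
  · exact (prefix_getElem (P_prefix hm) h).symm.symm ▸ (prefix_getElem (P_prefix hm) h)
  · exact prefix_getElem (P_prefix hm) hn ▸ rfl

/-- The segment of `w` starting at `i` of length `L`. -/
def seg (i L : ℕ) : List A4 := (List.range L).map fun k => w (i + k)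

lemma seg_length (i L : ℕ) : (seg i L).length = L := by simp [seg]

lemma seg_eq {m : ℕ} (i L : ℕ) (h : i + L ≤ 3 ^ m) : seg i L = ((P m).drop i).take L := by
  have hPl : (P m).length = 3 ^ m := P_length m
  apply List.ext_getElem
  · simp [seg_length, hPl]; omega
  · intro k h1 h2
    rw [seg_length] at h1
    have hk : i + k < (P m).length := by omega
    simp only [seg, List.getElem_map, List.getElem_range, List.getElem_take,
      List.getElem_drop]
    exact (P_getElem hk).symm

lemma window_infix {α : Type*} (x : List α) (a b T L : ℕ) (h : b + L ≤ T) :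
    (x.drop (a + b)).take L <:+: (x.drop a).take T := by
  have e : (x.drop (a + b)).take L = (((x.drop a).take T).drop b).take L := by
    rw [List.drop_take, List.take_take, List.drop_drop, min_eq_left (by omega)]
  rw [e]
  exact (List.take_prefix _ _).isInfix.trans (List.drop_suffix _ _).isInfix

lemma seg_infix (k i L n : ℕ) (h : i % 3 ^ k + L ≤ 3 ^ k * n) :
    seg i L <:+: fw^[k] (seg (i / 3 ^ k) n) := by
  obtain ⟨m, hb1, hb2⟩ : ∃ m, i / 3 ^ k + n ≤ 3 ^ m ∧ i + L ≤ 3 ^ (m + k) := by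
    refine ⟨i + n + L, ?_, ?_⟩
    · calc i / 3 ^ k + n ≤ i + n + L := by
            have := Nat.div_le_self i (3 ^ k); omega
        _ ≤ 3 ^ (i + n + L) := le_of_lt (Nat.lt_pow_self (by norm_num))
    · calc i + L ≤ i + n + L := by omega
        _ ≤ 3 ^ (i + n + L) := le_of_lt (Nat.lt_pow_self (by norm_num))
        _ ≤ 3 ^ (i + n + L + k) := Nat.pow_le_pow_right (by norm_num) (by omega)
  have hPmk : fw^[k] (P m) = P (m + k) := by
    rw [P, P, ← Function.iterate_add_apply, add_comm k m]
  rw [seg_eq (i / 3 ^ k) n hb1, fw_iter_window, hPmk, seg_eq i L hb2]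
  have := window_infix (P (m + k)) (3 ^ k * (i / 3 ^ k)) (i % 3 ^ k) (3 ^ k * n) L h
  rwa [Nat.div_add_mod] at this

/-- The eight length-2 factors of `w`. -/
def PL : List (List A4) :=
  [[0, 0], [0, 1], [0, 3], [1, 0], [1, 2], [2, 0], [3, 0], [3, 1]]

lemma infix_window {α : Type*} {v u : List α} (h : v <:+: u) :
    ∃ k ≤ u.length, v = (u.drop k).take v.length := by
  obtain ⟨s, t, rfl⟩ := h
  refine ⟨s.length, by simp, ?_⟩
  rw [List.append_assoc, show s.length = s.length + 0 by omega, List.drop_append]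
  simp

lemma check1 : ∀ p ∈ PL, ∀ k ≤ 6,
    (((fw p).drop k).take 2).length = 2 → ((fw p).drop k).take 2 ∈ PL := by decide

lemma check2 : ∀ p ∈ PL, p <:+: ([1, 2, 0, 3, 0, 0, 1, 0, 0, 3, 1] : List A4) := by decide

lemma pair_mem : ∀ j : ℕ, seg j 2 ∈ PL := by
  intro j
  induction j using Nat.strong_induction_on with
  | _ j ih =>
    rcases Nat.eq_zero_or_pos j with rfl | hj
    · have : seg 0 2 = [0, 1] := by decide
      rw [this]; decide
    · have h1 : seg j 2 <:+: fw^[1] (seg (j / 3 ^ 1) 2) := by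
        apply seg_infix
        have : j % 3 ^ 1 < 3 ^ 1 := Nat.mod_lt _ (by norm_num)
        omega
      rw [Function.iterate_one] at h1
      have h2 : seg (j / 3 ^ 1) 2 ∈ PL := ih (j / 3 ^ 1) (Nat.div_lt_self hj (by norm_num))
      obtain ⟨k, hk, he⟩ := infix_window h1
      rw [seg_length] at he
      have hkl : k ≤ 6 := by
        have : (fw (seg (j / 3 ^ 1) 2)).length = 6 := by
          rw [fw_length, seg_length]
        omega
      have hlen : (((fw (seg (j / 3 ^ 1) 2)).drop k).take 2).length = 2 := by
        rw [← he, seg_length]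
      rw [he]
      exact check1 _ h2 k hkl hlen

end Stmt16Aux

open Stmt16Aux in
/-- Every factor of `w` of length at most 2029 is a factor of `f⁷(u₀)`, where
`u₀ = 23141121142` (encoded with letters `1,2,3,4` as `0,1,2,3`); `|f⁷(u₀)| = 11·3⁷ = 24057`. -/
theorem stmt16 :
    (fw^[7] ([1, 2, 0, 3, 0, 0, 1, 0, 0, 3, 1] : List A4)).length = 24057 ∧
    ∀ v : List A4, FactorOf v w → v.length ≤ 2029 →
      v <:+: fw^[7] ([1, 2, 0, 3, 0, 0, 1, 0, 0, 3, 1] : List A4) := by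
  constructor
  · rw [fw_iter_length]; rfl
  · rintro v ⟨i, hocc⟩ hlen
    have hv : v = seg i v.length := hocc
    have h1 : seg i v.length <:+: fw^[7] (seg (i / 3 ^ 7) 2) := by
      apply seg_infix
      have : i % 3 ^ 7 < 3 ^ 7 := Nat.mod_lt _ (by norm_num)
      norm_num at this ⊢
      omega
    have h2 : seg (i / 3 ^ 7) 2 <:+: ([1, 2, 0, 3, 0, 0, 1, 0, 0, 3, 1] : List A4) :=
      check2 _ (pair_mem (i / 3 ^ 7))
    rw [hv]
    exact h1.trans (fw_iter_infix 7 h2)
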